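/- Let p be a prime, let B and C be commutative rings in which p is a non-zero-divisor, let δ be a p-derivation on B with associated Frobenius lift ψ (ψ(x) = x^p + p·δ(x)), let Δ be a p-derivation on C with associated Frobenius lift f (f(y) = y^p + p·Δ(y)), and let ι : B → C be a ring homomorphism such that f(ι(ψ^{m+1}(a))) = ι(ψ^{m+2}(a)) for all a ∈ B, where m ≥ 0 is a fixed integer. Let b ∈ B satisfy ι(δ^j(b)) = 0 for all 0 ≤ j ≤ m. Then for every n ≥ 0, the ideal of C generated by ι(δ^{m+1}(b)), Δ(ι(δ^{m+1}(b))), …, Δ^n(ι(δ^{m+1}(b))) equals the ideal of C generated by ι(δ^{m+1}(b)), ι(δ^{m+2}(b)), …, ι(δ^{m+n+1}(b)). -/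

import Mathlib

open MvPolynomial

/-- A `p`-derivation on a commutative ring `B`, relative to the polynomial
`Cp ∈ ℤ[X,Y]` satisfying `p·Cp = X^p + Y^p - (X+Y)^p`. -/
def IsPDeriv (p : ℕ) {B : Type*} [CommRing B] (Cp : MvPolynomial (Fin 2) ℤ)
    (δ : B → B) : Prop :=
  δ 1 = 0 ∧
  (∀ x y : B, δ (x + y) = δ x + δ y + MvPolynomial.aeval ![x, y] Cp) ∧
  (∀ x y : B, δ (x * y) = x ^ p * δ y + y ^ p * δ x + (p : B) * δ x * δ y)

/- ### Auxiliary general lemmas -/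

private lemma aux_cancel {R : Type*} [CommRing R] {r x y : R}
    (hr : r ∈ nonZeroDivisors R) (h : r * x = r * y) : x = y := by
  have := (mem_nonZeroDivisors_iff.mp hr).1 (x - y) (by linear_combination h)
  exact sub_eq_zero.mp this

private lemma aux_map_aeval {R S : Type*} [CommRing R] [CommRing S] (g : R →+* S)
    (P : MvPolynomial (Fin 2) ℤ) (v : Fin 2 → R) :
    g ((aeval v) P) = (aeval (fun i => g (v i))) P := by
  induction P using MvPolynomial.induction_on with
  | C a => simp [aeval_C]
  | add P Q hP hQ => simp [map_add, hP, hQ]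
  | mul_X P i hP => simp [map_mul, hP]

private lemma aux_cp_key {p : ℕ} (Cp : MvPolynomial (Fin 2) ℤ)
    (hCp : (p : MvPolynomial (Fin 2) ℤ) * Cp = X 0 ^ p + X 1 ^ p - (X 0 + X 1) ^ p)
    {R : Type*} [CommRing R] (x y : R) :
    (p : R) * (aeval ![x, y]) Cp = x ^ p + y ^ p - (x + y) ^ p := by
  have h := congrArg (fun P => (aeval ![x, y]) P) hCp
  simpa using h

private lemma aux_X1_dvd (P : MvPolynomial (Fin 2) ℤ) :
    (X 1 : MvPolynomial (Fin 2) ℤ) ∣ P - (aeval ![X 0, 0]) P := by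
  induction P using MvPolynomial.induction_on with
  | C a => simp [aeval_C]
  | add P Q hP hQ =>
      have h : P + Q - (aeval ![X 0, 0]) (P + Q)
          = (P - (aeval ![X 0, 0]) P) + (Q - (aeval ![X 0, 0]) Q) := by
        rw [map_add]; ring
      rw [h]; exact dvd_add hP hQ
  | mul_X P i hP =>
      rw [map_mul, aeval_X]
      fin_cases i
      · show (X 1 : MvPolynomial (Fin 2) ℤ) ∣ P * X 0 - (aeval ![X 0, 0]) P * ![X 0, 0] 0
        have h : P * X 0 - (aeval ![X 0, 0]) P * (![X 0, 0] 0)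
            = (P - (aeval ![X 0, 0]) P) * X 0 := by
          simp only [Matrix.cons_val_zero]; ring
        rw [h]; exact hP.mul_right _
      · show (X 1 : MvPolynomial (Fin 2) ℤ) ∣ P * X 1 - (aeval ![X 0, 0]) P * ![X 0, 0] 1
        have h : P * X 1 - (aeval ![X 0, 0]) P * (![X 0, 0] 1) = P * X 1 := by simp
        rw [h]; exact Dvd.intro_left P rfl

private lemma aux_cp_factor {p : ℕ} (hp : p.Prime) (Cp : MvPolynomial (Fin 2) ℤ)
    (hCp : (p : MvPolynomial (Fin 2) ℤ) * Cp = X 0 ^ p + X 1 ^ p - (X 0 + X 1) ^ p) :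
    ∃ Q : MvPolynomial (Fin 2) ℤ, Cp = X 1 * Q := by
  have h0 : (aeval ![X 0, (0 : MvPolynomial (Fin 2) ℤ)]) Cp = 0 := by
    have h := congrArg (fun P => (aeval ![X 0, (0 : MvPolynomial (Fin 2) ℤ)]) P) hCp
    simp only [map_mul, map_natCast, map_add, map_sub, map_pow, aeval_X,
      Matrix.cons_val_zero, Matrix.cons_val_one, Matrix.head_cons] at h
    rw [zero_pow hp.ne_zero, add_zero, add_zero, sub_self] at h
    have hpne : (p : MvPolynomial (Fin 2) ℤ) ≠ 0 := Nat.cast_ne_zero.mpr hp.ne_zero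
    rcases mul_eq_zero.mp h with h' | h'
    · exact absurd h' hpne
    · exact h'
  have hdvd := aux_X1_dvd Cp
  rw [h0, sub_zero] at hdvd
  exact hdvd

private lemma aux_pow_add_pmul {R : Type*} [CommRing R] (P x y : R) (n : ℕ) :
    ∃ u, (x + P * y) ^ n = x ^ n + P * u := by
  induction n with
  | zero => exact ⟨0, by ring⟩
  | succ n ih =>
      obtain ⟨u, hu⟩ := ih
      exact ⟨y * x ^ n + x * u + P * (y * u), by rw [pow_succ, hu]; ring⟩

private lemma aux_pow_sub_pow {R : Type*} [CommRing R] (P lam a b : R) (n : ℕ) :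
    ∃ W, (lam + P * a) ^ (n + 1) - (lam + P * b) ^ (n + 1)
      = P * (a - b) * (((n + 1 : ℕ) : R) * lam ^ n) + P * P * ((a - b) * W) := by
  induction n with
  | zero => exact ⟨0, by push_cast; ring⟩
  | succ n ih =>
      obtain ⟨W, hW⟩ := ih
      obtain ⟨u, hu⟩ := aux_pow_add_pmul P lam b (n + 1)
      refine ⟨((n + 1 : ℕ) : R) * a * lam ^ n + (lam + P * a) * W + u, ?_⟩
      have key : (lam + P * a) ^ (n + 1 + 1) - (lam + P * b) ^ (n + 1 + 1)
          = (lam + P * a) * ((lam + P * a) ^ (n + 1) - (lam + P * b) ^ (n + 1))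
            + ((lam + P * a) - (lam + P * b)) * (lam + P * b) ^ (n + 1) := by ring
      rw [key, hW, hu]
      push_cast
      ring

/-- The ideal generated by `ι(δ^{m+1}(b)), Δ(ι(δ^{m+1}(b))), …, Δ^n(ι(δ^{m+1}(b)))`
equals the ideal generated by `ι(δ^{m+1}(b)), ι(δ^{m+2}(b)), …, ι(δ^{m+n+1}(b))`. -/
theorem span_iterate_Delta_eq_span_iterate_delta
    (p : ℕ) (hp : p.Prime) {B C' : Type*} [CommRing B] [CommRing C']
    (hpB : (p : B) ∈ nonZeroDivisors B) (hpC : (p : C') ∈ nonZeroDivisors C')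
    (Cp : MvPolynomial (Fin 2) ℤ)
    (hCp : (p : MvPolynomial (Fin 2) ℤ) * Cp =
      X 0 ^ p + X 1 ^ p - (X 0 + X 1) ^ p)
    (δ : B → B) (hδ : IsPDeriv p Cp δ)
    (ψ : B → B) (hψ : ∀ x : B, ψ x = x ^ p + (p : B) * δ x)
    (Δ : C' → C') (hΔ : IsPDeriv p Cp Δ)
    (f : C' → C') (hf : ∀ y : C', f y = y ^ p + (p : C') * Δ y)
    (ι : B →+* C') (m : ℕ)
    (hcomm : ∀ a : B, f (ι (ψ^[m + 1] a)) = ι (ψ^[m + 2] a))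
    (b : B) (hb : ∀ j ≤ m, ι (δ^[j] b) = 0) :
    ∀ n : ℕ,
      Ideal.span (Set.range fun i : Fin (n + 1) =>
        Δ^[(i : ℕ)] (ι (δ^[m + 1] b))) =
      Ideal.span (Set.range fun i : Fin (n + 1) =>
        ι (δ^[m + 1 + (i : ℕ)] b)) := by
  -- cancellation helpers
  have hcB : ∀ {u v : B}, (p : B) * u = (p : B) * v → u = v := fun h => aux_cancel hpB h
  have hcC : ∀ {u v : C'}, (p : C') * u = (p : C') * v → u = v := fun h => aux_cancel hpC h
  -- the factor of Cp
  obtain ⟨Q, hQ⟩ := aux_cp_factor hp Cp hCp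
  have hcpcQB : ∀ x t : B, (aeval ![x, t]) Cp = t * (aeval ![x, t]) Q := by
    intro x t
    conv_lhs => rw [hQ]
    rw [map_mul, aeval_X]
    simp
  have hcpcQC : ∀ x t : C', (aeval ![x, t]) Cp = t * (aeval ![x, t]) Q := by
    intro x t
    conv_lhs => rw [hQ]
    rw [map_mul, aeval_X]
    simp
  have h0p : 0 < p := hp.pos
  -- δ 0 = 0, Δ 0 = 0
  have hδ0 : δ 0 = 0 := by
    have h1 := hδ.2.1 0 0
    have h2 : (aeval ![(0:B), 0]) Cp = 0 := by rw [hcpcQB]; ring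
    rw [add_zero, h2] at h1
    linear_combination -h1
  have hΔ0 : Δ 0 = 0 := by
    have h1 := hΔ.2.1 0 0
    have h2 : (aeval ![(0:C'), 0]) Cp = 0 := by rw [hcpcQC]; ring
    rw [add_zero, h2] at h1
    linear_combination -h1
  -- ring hom structures
  obtain ⟨Ψ, hΨ⟩ : ∃ Φ : B →+* B, ∀ x, Φ x = ψ x := by
    refine ⟨{ toFun := ψ, map_one' := ?_, map_mul' := ?_, map_zero' := ?_, map_add' := ?_ },
      fun x => rfl⟩
    · show ψ 1 = 1
      rw [hψ, hδ.1]; simp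
    · intro x y; show ψ (x * y) = ψ x * ψ y
      rw [hψ, hψ, hψ, hδ.2.2]; ring
    · show ψ 0 = 0
      rw [hψ, hδ0]; simp [zero_pow hp.ne_zero]
    · intro x y
      show ψ (x + y) = ψ x + ψ y
      rw [hψ, hψ, hψ, hδ.2.1]
      linear_combination aux_cp_key Cp hCp x y
  obtain ⟨F, hF⟩ : ∃ Φ : C' →+* C', ∀ x, Φ x = f x := by
    refine ⟨{ toFun := f, map_one' := ?_, map_mul' := ?_, map_zero' := ?_, map_add' := ?_ },
      fun x => rfl⟩
    · show f 1 = 1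
      rw [hf, hΔ.1]; simp
    · intro x y; show f (x * y) = f x * f y
      rw [hf, hf, hf, hΔ.2.2]; ring
    · show f 0 = 0
      rw [hf, hΔ0]; simp [zero_pow hp.ne_zero]
    · intro x y
      show f (x + y) = f x + f y
      rw [hf, hf, hf, hΔ.2.1]
      linear_combination aux_cp_key Cp hCp x y
  -- Frobenius lift commutes with the p-derivation
  have hδψ : ∀ x : B, δ (ψ x) = ψ (δ x) := by
    intro x
    apply hcB
    have e1 := hψ (ψ x)
    have e2 : ψ (ψ x) = (ψ x) ^ p + (p : B) * ψ (δ x) := by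
      have e2a : ψ (ψ x) = ψ (x ^ p + (p : B) * δ x) := congrArg ψ (hψ x)
      have e2b : Ψ (x ^ p + (p : B) * δ x) = (Ψ x) ^ p + (p : B) * Ψ (δ x) := by
        rw [map_add, map_pow, map_mul, map_natCast]
      simp only [hΨ] at e2b
      exact e2a.trans e2b
    linear_combination e2 - e1
  have hδψk : ∀ (k : ℕ) (x : B), δ (ψ^[k] x) = ψ^[k] (δ x) := by
    intro k
    induction k with
    | zero => intro x; simp
    | succ k ih =>
        intro x
        rw [Function.iterate_succ_apply', hδψ, ih]
        exact (Function.iterate_succ_apply' ψ k (δ x)).symm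
  -- scaling lemmas
  have hscaleB : ∀ x : B, δ ((p : B) * x)
      = (p : B) * δ x + x ^ p - (p : B) ^ (p - 1) * x ^ p := by
    intro x
    apply hcB
    have h1 := hψ ((p : B) * x)
    have h2 : ψ ((p : B) * x) = (p : B) * ψ x := by
      have := map_mul Ψ ((p : ℕ) : B) x
      rw [map_natCast] at this
      simp only [hΨ] at this
      exact this
    rw [hψ x] at h2
    have h3 : (p : B) * (p : B) ^ (p - 1) = (p : B) ^ p := by
      rw [← pow_succ']
      congr 1
      omega
    linear_combination h2 - h1 + x ^ p * h3
  have hscaleC : ∀ x : C', Δ ((p : C') * x)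
      = (p : C') * Δ x + x ^ p - (p : C') ^ (p - 1) * x ^ p := by
    intro x
    apply hcC
    have h1 := hf ((p : C') * x)
    have h2 : f ((p : C') * x) = (p : C') * f x := by
      have := map_mul F ((p : ℕ) : C') x
      rw [map_natCast] at this
      simp only [hF] at this
      exact this
    rw [hf x] at h2
    have h3 : (p : C') * (p : C') ^ (p - 1) = (p : C') ^ p := by
      rw [← pow_succ']
      congr 1
      omega
    linear_combination h2 - h1 + x ^ p * h3
  -- naturality of Cp evaluation
  have hcpcι : ∀ x z : B, ι ((aeval ![x, z]) Cp) = (aeval ![ι x, ι z]) Cp := by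
    intro x z
    rw [aux_map_aeval ι Cp ![x, z]]
    have h : (fun i => ι (![x, z] i)) = ![ι x, ι z] := by
      funext i
      fin_cases i <;> simp
    rw [h]
  -- the defect D x = ι (δ x) - Δ (ι x) : additive
  have hDadd : ∀ x z : B, ι (δ (x + z)) - Δ (ι (x + z))
      = (ι (δ x) - Δ (ι x)) + (ι (δ z) - Δ (ι z)) := by
    intro x z
    rw [hδ.2.1]
    simp only [map_add]
    rw [hΔ.2.1, hcpcι]
    ring
  have hD0 : ι (δ (0 : B)) - Δ (ι 0) = 0 := by rw [hδ0, map_zero, hΔ0]; ring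
  have hDsub : ∀ x z : B, ι (δ (x - z)) - Δ (ι (x - z))
      = (ι (δ x) - Δ (ι x)) - (ι (δ z) - Δ (ι z)) := by
    intro x z
    have h1 := hDadd (x - z) z
    rw [sub_add_cancel] at h1
    linear_combination -h1
  have hDp : ∀ x : B, ι (δ ((p : B) * x)) - Δ (ι ((p : B) * x))
      = (p : C') * (ι (δ x) - Δ (ι x)) := by
    intro x
    have h2 : ι ((p : B) * x) = (p : C') * ι x := by simp
    rw [hscaleB x, h2, hscaleC (ι x)]
    simp only [map_add, map_sub, map_mul, map_pow, map_natCast]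
    ring
  have hDppow : ∀ (k : ℕ) (x : B), ι (δ ((p : B) ^ k * x)) - Δ (ι ((p : B) ^ k * x))
      = (p : C') ^ k * (ι (δ x) - Δ (ι x)) := by
    intro k
    induction k with
    | zero => intro x; simp
    | succ k ih =>
        intro x
        have h1 : (p : B) ^ (k + 1) * x = (p : B) * ((p : B) ^ k * x) := by ring
        rw [h1, hDp, ih]
        ring
  -- D (x^p) = p * D x * V
  have hDpow : ∀ x : B, ∃ V, ι (δ (x ^ p)) - Δ (ι (x ^ p))
      = (p : C') * (ι (δ x) - Δ (ι x)) * V := by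
    intro x
    obtain ⟨q, hq⟩ : ∃ q, p = q + 1 := ⟨p - 1, by omega⟩
    obtain ⟨W, hW⟩ := aux_pow_sub_pow ((p : C')) ((ι x) ^ p) (ι (δ x)) (Δ (ι x)) q
    rw [← hq] at hW
    have hB1 : (p : B) * δ (x ^ p) = (ψ x) ^ p - (x ^ p) ^ p := by
      have e1 := hψ (x ^ p)
      have e2 : ψ (x ^ p) = (ψ x) ^ p := by
        have e3 := map_pow Ψ x p
        simp only [hΨ] at e3
        exact e3
      linear_combination e2 - e1
    have hC1 : (p : C') * Δ ((ι x) ^ p) = ((ι x) ^ p + (p : C') * Δ (ι x)) ^ p - ((ι x) ^ p) ^ p := by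
      have e1 := hf ((ι x) ^ p)
      have e2 : f ((ι x) ^ p) = (f (ι x)) ^ p := by
        have e3 := map_pow F (ι x) p
        simp only [hF] at e3
        exact e3
      rw [hf (ι x)] at e2
      linear_combination e2 - e1
    have hB1' := congrArg ι hB1
    simp only [map_mul, map_sub, map_pow, map_natCast] at hB1'
    have hψι : ι (ψ x) = (ι x) ^ p + (p : C') * ι (δ x) := by
      rw [hψ]
      simp [map_add, map_mul, map_pow]
    rw [hψι] at hB1'
    have hιxp : ι (x ^ p) = (ι x) ^ p := map_pow ι x p
    refine ⟨((ι x) ^ p) ^ q + W, hcC ?_⟩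
    rw [hιxp]
    linear_combination hB1' - hC1 + hW
  -- D vanishes on ψ^[m+1]-images
  have hDw : ∀ a : B, ι (δ (ψ^[m + 1] a)) - Δ (ι (ψ^[m + 1] a)) = 0 := by
    intro a
    have h := hcomm a
    rw [hf] at h
    have h2 : ψ^[m + 2] a = ψ (ψ^[m + 1] a) := Function.iterate_succ_apply' ψ (m + 1) a
    rw [h2, hψ] at h
    rw [map_add, map_pow, map_mul, map_natCast] at h
    have h3 : (p : C') * Δ (ι (ψ^[m + 1] a)) = (p : C') * ι (δ (ψ^[m + 1] a)) := by
      linear_combination h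
    rw [hcC h3]
    ring
  -- F' : controlled divisibility along ψ-iterates
  have hF' : ∀ (k : ℕ) (a : B) (I : Ideal C'),
      (∀ j ≤ k, ι (δ (δ^[j] a)) - Δ (ι (δ^[j] a)) ∈ I) →
      ∃ u ∈ I, ι (δ (ψ^[k] a)) - Δ (ι (ψ^[k] a)) = (p : C') ^ k * u := by
    intro k
    induction k with
    | zero =>
        intro a I hI
        refine ⟨ι (δ a) - Δ (ι a), hI 0 le_rfl, ?_⟩
        simp
    | succ k ih =>
        intro a I hI
        obtain ⟨u₁, hu₁, he₁⟩ := ih a I (fun j hj => hI j (by omega))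
        obtain ⟨u₂, hu₂, he₂⟩ := ih (δ a) I (by
          intro j hj
          have hrw : δ^[j] (δ a) = δ^[j + 1] a := (Function.iterate_succ_apply δ j a).symm
          rw [hrw]
          exact hI (j + 1) (by omega))
        obtain ⟨V, hV⟩ := hDpow (ψ^[k] a)
        have hsplit : ψ^[k + 1] a = (ψ^[k] a) ^ p + (p : B) * ψ^[k] (δ a) := by
          rw [Function.iterate_succ_apply', hψ, hδψk]
        refine ⟨u₁ * V + u₂, I.add_mem (Ideal.mul_mem_right V I hu₁) hu₂, ?_⟩
        rw [hsplit, hDadd, hDp, hV, he₁, he₂]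
        ring
  -- G'
  have hG' : ∀ (k : ℕ) (a : B) (I : Ideal C'),
      (∀ j < k, ι (δ (δ^[j] a)) - Δ (ι (δ^[j] a)) ∈ I) →
      ∃ u ∈ I, ι (δ (ψ^[k] a - (p : B) ^ k * δ^[k] a))
          - Δ (ι (ψ^[k] a - (p : B) ^ k * δ^[k] a)) = (p : C') ^ k * u := by
    intro k
    induction k with
    | zero =>
        intro a I hI
        refine ⟨0, I.zero_mem, ?_⟩
        have h : ψ^[0] a - (p : B) ^ 0 * δ^[0] a = 0 := by simp
        rw [h, hD0]
        simp
    | succ k ih =>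
        intro a I hI
        obtain ⟨u₁, hu₁, he₁⟩ := hF' k a I (fun j hj => hI j (by omega))
        obtain ⟨u₂, hu₂, he₂⟩ := ih (δ a) I (by
          intro j hj
          have hrw : δ^[j] (δ a) = δ^[j + 1] a := (Function.iterate_succ_apply δ j a).symm
          rw [hrw]
          exact hI (j + 1) (by omega))
        obtain ⟨V, hV⟩ := hDpow (ψ^[k] a)
        have hsplit : ψ^[k + 1] a - (p : B) ^ (k + 1) * δ^[k + 1] a
            = (ψ^[k] a) ^ p + (p : B) * (ψ^[k] (δ a) - (p : B) ^ k * δ^[k] (δ a)) := by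
          rw [Function.iterate_succ_apply' ψ, hψ, hδψk, Function.iterate_succ_apply δ]
          ring
        refine ⟨u₁ * V + u₂, I.add_mem (Ideal.mul_mem_right V I hu₁) hu₂, ?_⟩
        rw [hsplit, hDadd, hDp, hV, he₁, he₂]
        ring
  -- main lemma A
  have lemA : ∀ i : ℕ, Δ (ι (δ^[m + 1 + i] b)) - ι (δ^[m + 1 + (i + 1)] b)
      ∈ Ideal.span ((fun j => ι (δ^[m + 1 + j] b)) '' Set.Iic i) := by
    intro i
    induction i using Nat.strong_induction_on with
    | _ i IH =>
    have hhyp : ∀ j < m + 1, ι (δ (δ^[j] (δ^[i] b))) - Δ (ι (δ^[j] (δ^[i] b)))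
        ∈ Ideal.span ((fun j => ι (δ^[m + 1 + j] b)) '' Set.Iic i) := by
      intro j hj
      have hrw : δ^[j] (δ^[i] b) = δ^[j + i] b := (Function.iterate_add_apply δ j i b).symm
      rw [hrw]
      have hrw2 : δ (δ^[j + i] b) = δ^[j + i + 1] b := (Function.iterate_succ_apply' δ (j + i) b).symm
      rw [hrw2]
      rcases lt_trichotomy (j + i) m with hcase | hcase | hcase
      · rw [hb (j + i + 1) (by omega), hb (j + i) (by omega), hΔ0]
        simpa using Ideal.zero_mem _
      · rw [hb (j + i) (by omega), hΔ0]
        have h5 : δ^[j + i + 1] b = δ^[m + 1 + 0] b := by rw [show j + i + 1 = m + 1 + 0 by omega]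
        rw [h5]
        rw [sub_zero]
        exact Ideal.subset_span ⟨0, Set.mem_Iic.mpr (by omega), rfl⟩
      · have he2 : j + i + 1 = m + 1 + ((j + i - (m + 1)) + 1) := by omega
        have he : j + i = m + 1 + (j + i - (m + 1)) := by omega
        rw [show δ^[j + i + 1] b = δ^[m + 1 + ((j + i - (m + 1)) + 1)] b by rw [← he2],
            show δ^[j + i] b = δ^[m + 1 + (j + i - (m + 1))] b by rw [← he]]
        have hmem := IH (j + i - (m + 1)) (by omega)
        have hsub : Ideal.span ((fun j => ι (δ^[m + 1 + j] b)) '' Set.Iic (j + i - (m + 1)))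
            ≤ Ideal.span ((fun j => ι (δ^[m + 1 + j] b)) '' Set.Iic i) :=
          Ideal.span_mono (Set.image_mono (Set.Iic_subset_Iic.mpr (by omega)))
        have hneg := neg_mem (hsub hmem)
        convert hneg using 1
        ring
    obtain ⟨u, hu, heq⟩ := hG' (m + 1) (δ^[i] b) _ hhyp
    have hA1 : δ^[m + 1] (δ^[i] b) = δ^[m + 1 + i] b := (Function.iterate_add_apply δ (m + 1) i b).symm
    have hL : ι (δ (ψ^[m + 1] (δ^[i] b) - (p : B) ^ (m + 1) * δ^[m + 1] (δ^[i] b)))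
        - Δ (ι (ψ^[m + 1] (δ^[i] b) - (p : B) ^ (m + 1) * δ^[m + 1] (δ^[i] b)))
        = (p : C') ^ (m + 1) * (Δ (ι (δ^[m + 1 + i] b)) - ι (δ^[m + 1 + (i + 1)] b)) := by
      rw [hDsub, hDw, hA1, hDppow]
      have hrw2 : δ (δ^[m + 1 + i] b) = δ^[m + 1 + (i + 1)] b := by
        rw [show m + 1 + (i + 1) = (m + 1 + i) + 1 from rfl]
        exact (Function.iterate_succ_apply' δ (m + 1 + i) b).symm
      rw [hrw2]
      ring
    rw [hL] at heq
    have hcpow : (p : C') ^ (m + 1) ∈ nonZeroDivisors C' := pow_mem hpC (m + 1)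
    rw [aux_cancel hcpow heq]
    exact hu
  -- Δ maps the partial span into the next span
  have hΔspan : ∀ (N : ℕ) (t : C'),
      t ∈ Ideal.span ((fun j => ι (δ^[m + 1 + j] b)) '' Set.Iio N) →
      Δ t ∈ Ideal.span ((fun j => ι (δ^[m + 1 + j] b)) '' Set.Iic N) := by
    intro N t ht
    have main : ∀ x ∈ Ideal.span ((fun j => ι (δ^[m + 1 + j] b)) '' Set.Iio N),
        x ∈ Ideal.span ((fun j => ι (δ^[m + 1 + j] b)) '' Set.Iic N)
        ∧ Δ x ∈ Ideal.span ((fun j => ι (δ^[m + 1 + j] b)) '' Set.Iic N) := by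
      intro x hx
      refine Submodule.span_induction ?_ ?_ ?_ ?_ hx
      · rintro s ⟨e, he, rfl⟩
        have heN : e < N := he
        constructor
        · exact Ideal.subset_span ⟨e, Set.mem_Iic.mpr (by omega), rfl⟩
        · show Δ (ι (δ^[m + 1 + e] b)) ∈ _
          have h1 : Δ (ι (δ^[m + 1 + e] b))
              = ι (δ^[m + 1 + (e + 1)] b)
                + (Δ (ι (δ^[m + 1 + e] b)) - ι (δ^[m + 1 + (e + 1)] b)) := by ring
          rw [h1]
          refine Ideal.add_mem _ (Ideal.subset_span ⟨e + 1, Set.mem_Iic.mpr (by omega), rfl⟩) ?_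
          have hsub : Ideal.span ((fun j => ι (δ^[m + 1 + j] b)) '' Set.Iic e)
              ≤ Ideal.span ((fun j => ι (δ^[m + 1 + j] b)) '' Set.Iic N) :=
            Ideal.span_mono (Set.image_mono (Set.Iic_subset_Iic.mpr (by omega)))
          exact hsub (lemA e)
      · exact ⟨Ideal.zero_mem _, by rw [hΔ0]; exact Ideal.zero_mem _⟩
      · rintro a c _ _ ⟨ha1, ha2⟩ ⟨hc1, hc2⟩
        refine ⟨Ideal.add_mem _ ha1 hc1, ?_⟩
        rw [hΔ.2.1, hcpcQC]
        exact Ideal.add_mem _ (Ideal.add_mem _ ha2 hc2) (Ideal.mul_mem_right _ _ hc1)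
      · rintro r a _ ⟨ha1, ha2⟩
        constructor
        · simpa [smul_eq_mul] using Ideal.mul_mem_left _ r ha1
        · rw [smul_eq_mul, hΔ.2.2]
          refine Ideal.add_mem _ (Ideal.add_mem _ ?_ ?_) ?_
          · exact Ideal.mul_mem_left _ _ ha2
          · exact Ideal.mul_mem_right _ _ (Ideal.pow_mem_of_mem _ ha1 p hp.pos)
          · exact Ideal.mul_mem_left _ _ ha2
    exact (main t ht).2
  -- lemma T
  have lemT : ∀ k : ℕ, Δ^[k] (ι (δ^[m + 1] b)) - ι (δ^[m + 1 + k] b)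
      ∈ Ideal.span ((fun j => ι (δ^[m + 1 + j] b)) '' Set.Iio k) := by
    intro k
    induction k with
    | zero => simpa using Ideal.zero_mem _
    | succ k ih =>
        have hIioIic : Set.Iio (k + 1) = Set.Iic k := by ext e; simp [Nat.lt_succ_iff]
        rw [hIioIic]
        have hsplit : Δ^[k + 1] (ι (δ^[m + 1] b)) - ι (δ^[m + 1 + (k + 1)] b)
            = (Δ (ι (δ^[m + 1 + k] b)) - ι (δ^[m + 1 + (k + 1)] b))
              + Δ (Δ^[k] (ι (δ^[m + 1] b)) - ι (δ^[m + 1 + k] b))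
              + (aeval ![ι (δ^[m + 1 + k] b),
                  Δ^[k] (ι (δ^[m + 1] b)) - ι (δ^[m + 1 + k] b)]) Cp := by
          conv_lhs =>
            rw [Function.iterate_succ_apply']
            rw [show Δ^[k] (ι (δ^[m + 1] b))
                = ι (δ^[m + 1 + k] b) + (Δ^[k] (ι (δ^[m + 1] b)) - ι (δ^[m + 1 + k] b)) from by ring]
          rw [hΔ.2.1]
          ring
        rw [hsplit]
        refine Ideal.add_mem _ (Ideal.add_mem _ (lemA k) (hΔspan k _ ih)) ?_
        rw [hcpcQC]
        refine Ideal.mul_mem_right _ _ ?_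
        have hsub : Ideal.span ((fun j => ι (δ^[m + 1 + j] b)) '' Set.Iio k)
            ≤ Ideal.span ((fun j => ι (δ^[m + 1 + j] b)) '' Set.Iic k) :=
          Ideal.span_mono (Set.image_mono (fun e (he2 : e ∈ Set.Iio k) => Set.mem_Iic.mpr (by
            simp only [Set.mem_Iio] at he2
            omega)))
        exact hsub ih
  -- final assembly
  intro n
  apply le_antisymm
  · rw [Ideal.span_le]
    rintro x ⟨i, rfl⟩
    show Δ^[(i : ℕ)] (ι (δ^[m + 1] b)) ∈ _
    have h1 := lemT (i : ℕ)
    have hdecomp : Δ^[(i : ℕ)] (ι (δ^[m + 1] b))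
        = (Δ^[(i : ℕ)] (ι (δ^[m + 1] b)) - ι (δ^[m + 1 + (i : ℕ)] b))
          + ι (δ^[m + 1 + (i : ℕ)] b) := by ring
    rw [hdecomp]
    refine Ideal.add_mem _ ?_ (Ideal.subset_span ⟨i, rfl⟩)
    have hsub : Ideal.span ((fun j => ι (δ^[m + 1 + j] b)) '' Set.Iio (i : ℕ))
        ≤ Ideal.span (Set.range fun i : Fin (n + 1) => ι (δ^[m + 1 + (i : ℕ)] b)) := by
      rw [Ideal.span_le]
      rintro z ⟨e, he, rfl⟩
      have hi := i.isLt
      simp only [Set.mem_Iio] at he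
      exact Ideal.subset_span ⟨⟨e, by omega⟩, rfl⟩
    exact hsub h1
  · rw [Ideal.span_le]
    rintro x ⟨i, rfl⟩
    show ι (δ^[m + 1 + (i : ℕ)] b) ∈ _
    have main : ∀ j, j ≤ n → ι (δ^[m + 1 + j] b)
        ∈ Ideal.span (Set.range fun i : Fin (n + 1) => Δ^[(i : ℕ)] (ι (δ^[m + 1] b))) := by
      intro j
      induction j using Nat.strong_induction_on with
      | _ j IHj =>
      intro hj
      have h1 := lemT j
      have hdecomp : ι (δ^[m + 1 + j] b)
          = Δ^[j] (ι (δ^[m + 1] b)) - (Δ^[j] (ι (δ^[m + 1] b)) - ι (δ^[m + 1 + j] b)) := by ring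
      rw [hdecomp]
      refine Ideal.sub_mem _ (Ideal.subset_span ⟨⟨j, by omega⟩, rfl⟩) ?_
      have hsub : Ideal.span ((fun j => ι (δ^[m + 1 + j] b)) '' Set.Iio j)
          ≤ Ideal.span (Set.range fun i : Fin (n + 1) => Δ^[(i : ℕ)] (ι (δ^[m + 1] b))) := by
        rw [Ideal.span_le]
        rintro z ⟨e, he, rfl⟩
        simp only [Set.mem_Iio] at he
        exact IHj e he (by omega)
      exact hsub h1
    exact main (i : ℕ) (Nat.lt_succ_iff.mp i.isLt)
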